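/- Let L be a Lie superalgebra, let ξ, θ ∈ L be odd elements, and define recursively Φ⁰ = θ, Φ^{k+1} = [Φ^k, ξ]. Then for all natural numbers k, l: [[[Φ^k, Φ^l], ξ], ξ] = [Φ^{k+2}, Φ^l] + [Φ^k, Φ^{l+2}]. -/
import Mathlib


/-- Lemma 4.2 of the paper: for odd `ξ, θ` and `Φ⁰ = θ`, `Φ^{k+1} = [Φ^k, ξ]`,
one has `[[[Φ^k, Φ^l], ξ], ξ] = [Φ^{k+2}, Φ^l] + [Φ^k, Φ^{l+2}]`. -/
theorem double_ad_on_Phi_bracket {R L : Type*} [CommRing R] [AddCommGroup L] [Module R L]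
    (G : ZMod 2 → Submodule R L)
    (bracket : L →ₗ[R] L →ₗ[R] L)
    (hgrade : ∀ (p q : ZMod 2) (a b : L), a ∈ G p → b ∈ G q → bracket a b ∈ G (p + q))
    (hskew : ∀ (p q : ZMod 2) (a b : L), a ∈ G p → b ∈ G q →
      bracket a b = -((-1 : ℤ) ^ (p.val * q.val) • bracket b a))
    (hjacobi : ∀ (p q : ZMod 2) (a b c : L), a ∈ G p → b ∈ G q →
      bracket a (bracket b c) =
        bracket (bracket a b) c + (-1 : ℤ) ^ (p.val * q.val) • bracket b (bracket a c))
    (ξ θ : L) (hξ : ξ ∈ G 1) (hθ : θ ∈ G 1)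
    (Φ : ℕ → L) (hΦ0 : Φ 0 = θ) (hΦ : ∀ k, Φ (k + 1) = bracket (Φ k) ξ)
    (k l : ℕ) :
    bracket (bracket (bracket (Φ k) (Φ l)) ξ) ξ =
      bracket (Φ (k + 2)) (Φ l) + bracket (Φ k) (Φ (l + 2)) := by
  have hz : ∀ x : ZMod 2, x = 0 ∨ x = 1 := by decide
  -- graded Leibniz rule for the right bracket with ξ
  have hleib : ∀ (p q : ZMod 2) (a b : L), a ∈ G p → b ∈ G q →
      bracket (bracket a b) ξ =
        ((-1 : ℤ) ^ q.val) • bracket (bracket a ξ) b + bracket a (bracket b ξ) := by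
    intro p q a b ha hb
    have hab := hgrade p q a b ha hb
    have h1 := hskew (p + q) 1 (bracket a b) ξ hab hξ
    have h2 := hjacobi 1 p ξ a b hξ ha
    have h3 := hskew 1 p ξ a hξ ha
    have h4 := hskew 1 q ξ b hξ hb
    rcases hz p with hp | hp <;> rcases hz q with hq | hq <;> subst hp <;> subst hq <;>
      rw [h1, h2, h3, h4] <;>
      simp only [(by decide : ((1 : ZMod 2) + 1).val = 0),
        (by decide : ((0 : ZMod 2) + 1).val = 1), (by decide : ((1 : ZMod 2) + 0).val = 1),
        (by decide : ((0 : ZMod 2) + 0).val = 0),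
        ZMod.val_zero, ZMod.val_one, mul_zero, mul_one, zero_mul, one_mul, zero_add, add_zero,
        pow_zero, pow_one, one_smul, neg_smul, neg_neg, map_neg, map_smul,
        LinearMap.neg_apply, LinearMap.smul_apply, smul_neg] <;>
      module
  -- parity of Φ k
  have hmem : ∀ k : ℕ, Φ k ∈ G ((k : ZMod 2) + 1) := by
    intro k
    induction k with
    | zero => simpa [hΦ0] using hθ
    | succ n ih =>
        have := hgrade ((n : ZMod 2) + 1) 1 (Φ n) ξ ih hξ
        rw [hΦ n]
        convert this using 2
        push_cast
        ring
  set pk : ZMod 2 := (k : ZMod 2) + 1 with hpk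
  set ql : ZMod 2 := (l : ZMod 2) + 1 with hql
  have hmemk1 : Φ (k + 1) ∈ G (pk + 1) := by
    have := hmem (k + 1); convert this using 2; push_cast [hpk]; ring
  have hmeml1 : Φ (l + 1) ∈ G (ql + 1) := by
    have := hmem (l + 1); convert this using 2; push_cast [hql]; ring
  have e1 := hleib pk ql (Φ k) (Φ l) (hmem k) (hmem l)
  have e2 := hleib (pk + 1) ql (Φ (k + 1)) (Φ l) hmemk1 (hmem l)
  have e3 := hleib pk (ql + 1) (Φ k) (Φ (l + 1)) (hmem k) hmeml1
  simp only [hΦ] at e1 e2 e3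
  rw [show k + 2 = k + 1 + 1 from rfl, show l + 2 = l + 1 + 1 from rfl]
  simp only [hΦ]
  rcases hz ql with hq | hq <;>
    simp only [hq, (by decide : ((1 : ZMod 2) + 1).val = 0),
      (by decide : ((0 : ZMod 2) + 1).val = 1),
      ZMod.val_zero, ZMod.val_one, pow_zero, pow_one, one_smul, neg_smul] at e1 e2 e3 <;>
    rw [e1] <;>
    simp only [map_add, map_neg, LinearMap.add_apply, LinearMap.neg_apply] <;>
    rw [e2, e3] <;> abel
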